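/- Let A = Z₊ Δ₊ Z₊ᵀ + Z₋ Δ₋ Z₋ᵀ with Z₊, Z₋, Δ₊, Δ₋ as above, R_R an n₋×n₊ matrix, P_R invertible, B_R = P_R(Z₋ᵀ + R_R Z₊ᵀ), and Σ_N = Z₋ Δ₋ P_R⁻¹. If C_R := −Δ₊ − R_Rᵀ Δ₋ R_R is negative semidefinite, then C_N := −A + Σ_N B_R + B_Rᵀ Σ_Nᵀ is negative semidefinite. -/

import Mathlib

open Matrix

/-- with the penalty `Σ_N = Z₋ Δ₋ P_R⁻¹`, the right-boundary matrix
`C_N = −A + Σ_N B_R + B_Rᵀ Σ_Nᵀ` is negative semidefinite whenever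
`C_R = −Δ₊ − R_Rᵀ Δ₋ R_R` is. -/
theorem stmt_4 {n np nm : ℕ}
    (Zp : Matrix (Fin n) (Fin np) ℝ) (Zm : Matrix (Fin n) (Fin nm) ℝ)
    (Δp : Matrix (Fin np) (Fin np) ℝ) (Δm : Matrix (Fin nm) (Fin nm) ℝ)
    (hΔp : Δp.PosDef) (hΔm : (-Δm).PosDef)
    (RR : Matrix (Fin nm) (Fin np) ℝ)
    (PR : Matrix (Fin nm) (Fin nm) ℝ) (hPR : IsUnit PR.det)
    (A : Matrix (Fin n) (Fin n) ℝ) (hA : A = Zp * Δp * Zpᵀ + Zm * Δm * Zmᵀ)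
    (BR : Matrix (Fin nm) (Fin n) ℝ) (hBR : BR = PR * (Zmᵀ + RR * Zpᵀ))
    (SigN : Matrix (Fin n) (Fin nm) ℝ) (hSigN : SigN = Zm * Δm * PR⁻¹)
    (hCR : (-(-Δp - RRᵀ * Δm * RR)).PosSemidef) :
    (-(-A + SigN * BR + BRᵀ * SigNᵀ)).PosSemidef := by
  have hΔmsym : Δmᵀ = Δm := by
    have h := hΔm.isHermitian
    rw [Matrix.IsHermitian, Matrix.conjTranspose_neg, neg_inj,
      Matrix.conjTranspose_eq_transpose_of_trivial] at h
    exact h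
  have hinv : PR⁻¹ * PR = 1 := Matrix.nonsing_inv_mul PR hPR
  have hinv' : PRᵀ * PR⁻¹ᵀ = 1 := by
    rw [← Matrix.transpose_mul, hinv, Matrix.transpose_one]
  have key : -(-A + SigN * BR + BRᵀ * SigNᵀ)
      = Zp * (Δp + RRᵀ * Δm * RR) * Zpᵀ
        + (Zm + Zp * RRᵀ) * (-Δm) * (Zm + Zp * RRᵀ)ᵀ := by
    subst hA hBR hSigN
    have h1 : Zm * Δm * PR⁻¹ * (PR * (Zmᵀ + RR * Zpᵀ))
        = Zm * Δm * (Zmᵀ + RR * Zpᵀ) := by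
      calc Zm * Δm * PR⁻¹ * (PR * (Zmᵀ + RR * Zpᵀ))
          = Zm * Δm * (PR⁻¹ * PR) * (Zmᵀ + RR * Zpᵀ) := by
            simp only [Matrix.mul_assoc]
        _ = Zm * Δm * (Zmᵀ + RR * Zpᵀ) := by rw [hinv, Matrix.mul_one]
    have h2 : (PR * (Zmᵀ + RR * Zpᵀ))ᵀ * (Zm * Δm * PR⁻¹)ᵀ
        = (Zmᵀ + RR * Zpᵀ)ᵀ * Δm * Zmᵀ := by
      simp only [Matrix.transpose_mul]
      calc (Zmᵀ + RR * Zpᵀ)ᵀ * PRᵀ * (PR⁻¹ᵀ * (Δmᵀ * Zmᵀ))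
          = (Zmᵀ + RR * Zpᵀ)ᵀ * (PRᵀ * PR⁻¹ᵀ) * (Δmᵀ * Zmᵀ) := by
            simp only [Matrix.mul_assoc]
        _ = (Zmᵀ + RR * Zpᵀ)ᵀ * Δm * Zmᵀ := by
            rw [hinv', Matrix.mul_one, hΔmsym, Matrix.mul_assoc]
    rw [h1, h2]
    simp only [Matrix.transpose_add, Matrix.transpose_mul, Matrix.transpose_transpose,
      hΔmsym]
    simp only [Matrix.mul_add, Matrix.add_mul, Matrix.mul_neg, Matrix.neg_mul,
      neg_add_rev, neg_neg, Matrix.mul_assoc]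
    abel
  rw [key]
  have hCR' : (Δp + RRᵀ * Δm * RR).PosSemidef := by
    have : -(-Δp - RRᵀ * Δm * RR) = Δp + RRᵀ * Δm * RR := by noncomm_ring
    rwa [this] at hCR
  have t1 := hCR'.mul_mul_conjTranspose_same Zp
  have t2 := hΔm.posSemidef.mul_mul_conjTranspose_same (Zm + Zp * RRᵀ)
  simpa [Matrix.conjTranspose_eq_transpose_of_trivial] using t1.add t2
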